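/- Let φ be a Positive-NAE-3SAT instance with variables x₁,…,x_n and let φ' be obtained from φ by adding two fresh variables y, z and, for each i, the clause (x_i, y, z). Then φ' is connected, and the number of NAE-satisfying assignments of φ' equals exactly twice the number of NAE-satisfying assignments of φ. -/

import Mathlib

def NAEClause {α : Type*} (a : α → Bool) (c : α × α × α) : Prop :=
  ¬ (a c.1 = a c.2.1 ∧ a c.2.1 = a c.2.2)

def NAESat {α : Type*} (φ : List (α × α × α)) (a : α → Bool) : Prop :=
  ∀ c ∈ φ, NAEClause a c

def NAEVars {α : Type*} (φ : List (α × α × α)) : Set α :=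
  {x | ∃ c ∈ φ, x = c.1 ∨ x = c.2.1 ∨ x = c.2.2}

/-- `φ` is connected: for every nontrivial partition of its clause set, some
variable occurs in clauses on both sides. -/
def NAEConnected {α : Type*} [DecidableEq α] (φ : List (α × α × α)) : Prop :=
  ∀ S : Finset (α × α × α), S ⊆ φ.toFinset → S.Nonempty → S ≠ φ.toFinset →
    ∃ (x : α) (c c' : α × α × α), c ∈ S ∧ c' ∈ φ.toFinset ∧ c' ∉ S ∧
      (x = c.1 ∨ x = c.2.1 ∨ x = c.2.2) ∧
      (x = c'.1 ∨ x = c'.2.1 ∨ x = c'.2.2)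

/-- Adding two fresh variables `y, z` and, for each variable `x` of `φ`, the
clause `(x, y, z)`, yields a connected instance `φ'` with exactly twice as many
NAE-satisfying assignments as `φ`. -/
theorem naesat_connectification {α : Type*} [DecidableEq α]
    (φ : List (α × α × α)) (hne : φ ≠ [])
    (xs : List α) (hxs : ∀ x, x ∈ xs ↔ x ∈ NAEVars φ)
    (y z : α) (hy : y ∉ NAEVars φ) (hz : z ∉ NAEVars φ) (hyz : y ≠ z) :
    NAEConnected (φ ++ xs.map (fun x => (x, y, z))) ∧
    Nat.card {a : α → Bool //
        NAESat (φ ++ xs.map (fun x => (x, y, z))) a ∧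
        ∀ x ∉ NAEVars (φ ++ xs.map (fun x => (x, y, z))), a x = false} =
      2 * Nat.card {a : α → Bool //
        NAESat φ a ∧ ∀ x ∉ NAEVars φ, a x = false} := by
  classical
  obtain ⟨c₀, hc₀⟩ : ∃ c, c ∈ φ := by
    cases φ with
    | nil => exact absurd rfl hne
    | cons c l => exact ⟨c, List.mem_cons_self⟩
  set φ' := φ ++ xs.map (fun x => (x, y, z)) with hφ'
  have hmemxs : ∀ x ∈ xs, x ∈ NAEVars φ := fun x hx => (hxs x).1 hx
  have hx0 : c₀.1 ∈ xs := (hxs c₀.1).2 ⟨c₀, hc₀, Or.inl rfl⟩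
  have hvars' : ∀ x, x ∈ NAEVars φ' ↔ x ∈ NAEVars φ ∨ x = y ∨ x = z := by
    intro x
    constructor
    · rintro ⟨c, hc, hx⟩
      rcases List.mem_append.1 hc with h | h
      · exact Or.inl ⟨c, h, hx⟩
      · rcases List.mem_map.1 h with ⟨w, hw, rfl⟩
        rcases hx with rfl | rfl | rfl
        · exact Or.inl (hmemxs _ hw)
        · exact Or.inr (Or.inl rfl)
        · exact Or.inr (Or.inr rfl)
    · rintro (⟨c, hc, hx⟩ | rfl | rfl)
      · exact ⟨c, List.mem_append_left _ hc, hx⟩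
      · exact ⟨(c₀.1, x, z), List.mem_append_right _
          (List.mem_map.2 ⟨c₀.1, hx0, rfl⟩), Or.inr (Or.inl rfl)⟩
      · exact ⟨(c₀.1, y, x), List.mem_append_right _
          (List.mem_map.2 ⟨c₀.1, hx0, rfl⟩), Or.inr (Or.inr rfl)⟩
  constructor
  · -- connectivity
    intro S hS hSne hSne'
    by_cases hl : ∀ w ∈ xs, (w, y, z) ∈ S
    · obtain ⟨c', hc'φ, hc'S⟩ : ∃ c', c' ∈ φ'.toFinset ∧ c' ∉ S := by
        by_contra h
        push_neg at h
        exact hSne' (Finset.Subset.antisymm hS (fun c hc => h c hc))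
      rcases List.mem_append.1 (List.mem_toFinset.1 hc'φ) with h | h
      · have hw : c'.1 ∈ xs := (hxs _).2 ⟨c', h, Or.inl rfl⟩
        exact ⟨c'.1, (c'.1, y, z), c', hl _ hw, hc'φ, hc'S, Or.inl rfl, Or.inl rfl⟩
      · rcases List.mem_map.1 h with ⟨w, hw, rfl⟩
        exact absurd (hl w hw) hc'S
    · push_neg at hl
      obtain ⟨w, hw, hwS⟩ := hl
      have hwφ' : (w, y, z) ∈ φ'.toFinset := List.mem_toFinset.2
        (List.mem_append_right _ (List.mem_map.2 ⟨w, hw, rfl⟩))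
      obtain ⟨c, hcS⟩ := hSne
      rcases List.mem_append.1 (List.mem_toFinset.1 (hS hcS)) with h | h
      · by_cases hq : (c.1, y, z) ∈ S
        · exact ⟨y, (c.1, y, z), (w, y, z), hq, hwφ', hwS,
            Or.inr (Or.inl rfl), Or.inr (Or.inl rfl)⟩
        · have hc1 : c.1 ∈ xs := (hxs _).2 ⟨c, h, Or.inl rfl⟩
          exact ⟨c.1, c, (c.1, y, z), hcS, List.mem_toFinset.2
            (List.mem_append_right _ (List.mem_map.2 ⟨c.1, hc1, rfl⟩)), hq,
            Or.inl rfl, Or.inl rfl⟩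
      · rcases List.mem_map.1 h with ⟨v, hv, rfl⟩
        exact ⟨y, (v, y, z), (w, y, z), hcS, hwφ', hwS,
          Or.inr (Or.inl rfl), Or.inr (Or.inl rfl)⟩
  · -- cardinality
    have hsat_ext : ∀ (a b : α → Bool), (∀ x ∈ NAEVars φ, a x = b x) →
        NAESat φ a → NAESat φ b := by
      intro a b hab ha c hc
      have h1 := hab c.1 ⟨c, hc, Or.inl rfl⟩
      have h2 := hab c.2.1 ⟨c, hc, Or.inr (Or.inl rfl)⟩
      have h3 := hab c.2.2 ⟨c, hc, Or.inr (Or.inr rfl)⟩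
      have hca := ha c hc
      unfold NAEClause at hca ⊢
      rw [← h1, ← h2, ← h3]
      exact hca
    have hclyz : ∀ a : α → Bool, NAESat φ' a → a y ≠ a z := by
      intro a ha hyz'
      have hvx : ∀ x ∈ NAEVars φ, a x ≠ a y := by
        intro x hx h
        have hxxs : x ∈ xs := (hxs x).2 hx
        exact ha (x, y, z) (List.mem_append_right _
          (List.mem_map.2 ⟨x, hxxs, rfl⟩)) ⟨h, hyz'⟩
      have h1 := ha c₀ (List.mem_append_left _ hc₀)
      have e1 : a c₀.1 ≠ a y := hvx _ ⟨c₀, hc₀, Or.inl rfl⟩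
      have e2 : a c₀.2.1 ≠ a y := hvx _ ⟨c₀, hc₀, Or.inr (Or.inl rfl)⟩
      have e3 : a c₀.2.2 ≠ a y := hvx _ ⟨c₀, hc₀, Or.inr (Or.inr rfl)⟩
      apply h1
      constructor
      · revert e1 e2; cases a y <;> cases a c₀.1 <;> cases a c₀.2.1 <;> simp
      · revert e2 e3; cases a y <;> cases a c₀.2.1 <;> cases a c₀.2.2 <;> simp
    let A := {a : α → Bool // NAESat φ' a ∧ ∀ x ∉ NAEVars φ', a x = false}
    let B := {a : α → Bool // NAESat φ a ∧ ∀ x ∉ NAEVars φ, a x = false}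
    have e : A ≃ B × Bool := by
      refine
        { toFun := fun a => (⟨fun x => if x = y ∨ x = z then false else a.1 x, ?_, ?_⟩, a.1 y)
          invFun := fun p => ⟨fun x => if x = y then p.2 else if x = z then !p.2 else p.1.1 x, ?_, ?_⟩
          left_inv := ?_
          right_inv := ?_ }
      · -- NAESat φ for restriction
        apply hsat_ext a.1
        · intro x hx
          have hxy : ¬ (x = y ∨ x = z) := by
            rintro (rfl | rfl)
            · exact hy hx
            · exact hz hx
          simp [hxy]
        · intro c hc
          exact a.2.1 c (List.mem_append_left _ hc)
      · -- normalization for restriction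
        intro x hx
        by_cases hxy : x = y ∨ x = z
        · simp [hxy]
        · have : x ∉ NAEVars φ' := by
            rw [hvars']
            push_neg at hxy ⊢
            exact ⟨hx, hxy.1, hxy.2⟩
          simp [hxy, a.2.2 x this]
      · -- NAESat φ' for extension
        rename_i p
        intro c hc
        rcases List.mem_append.1 hc with h | h
        · refine hsat_ext p.1.1 _ ?_ p.1.2.1 c h
          intro x hx
          have hxy : x ≠ y := by rintro rfl; exact hy hx
          have hxz : x ≠ z := by rintro rfl; exact hz hx
          simp [hxy, hxz]
        · rcases List.mem_map.1 h with ⟨w, hw, rfl⟩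
          intro hcon
          have h2 := hcon.2
          simp only [hyz.symm] at h2
          simp at h2
      · -- normalization for extension
        rename_i p
        intro x hx
        rw [hvars'] at hx
        push_neg at hx
        simp [hx.2.1, hx.2.2, p.1.2.2 x hx.1]
      · -- left inverse
        intro a
        apply Subtype.ext
        funext x
        by_cases hxy : x = y
        · subst hxy; simp
        · by_cases hxz : x = z
          · subst hxz
            simp only [hxy, if_false, if_pos rfl]
            have := hclyz a.1 a.2.1
            cases ha : a.1 y <;> cases hb : a.1 x <;> simp_all
          · have hxo : ¬ (x = y ∨ x = z) := by tauto
            simp [hxy, hxz, hxo]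
      · -- right inverse
        rintro ⟨b, s⟩
        refine Prod.ext ?_ ?_
        · apply Subtype.ext
          funext x
          by_cases hxy : x = y
          · subst hxy
            simp [b.2.2 x hy]
          · by_cases hxz : x = z
            · subst hxz
              have hxo : (x = y ∨ x = x) := Or.inr rfl
              simp [hxo, hxy, b.2.2 x hz]
            · have hxo : ¬ (x = y ∨ x = z) := by tauto
              simp [hxy, hxz, hxo]
        · simp
    calc Nat.card A = Nat.card (B × Bool) := Nat.card_congr e
      _ = Nat.card B * 2 := by rw [Nat.card_prod]; simp
      _ = 2 * Nat.card B := Nat.mul_comm _ _
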